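/- Let c ≥ 2 and let ν₁,…,ν_c be nonzero real numbers with 1 + ν₁ + ⋯ + ν_c ≠ 0. Let n₀ : [0,1] → ℝ be a constant function with value d₀ > 0 (the solvent), and let n₁,…,n_c : [0,1] → ℝ be differentiable with n_i(t) > 0 and ν_j·n_i′(t) = ν_i·n_j′(t) for all 1 ≤ i,j ≤ c and all t. Put n(t) = n₀(t)+n₁(t)+⋯+n_c(t), x_i(t) = n_i(t)/n(t) for 0 ≤ i ≤ c, and Q(t) = x₀(t)·∏_{i=1}^c x_i(t)^{ν_i}. Then Q is constant on [0,1] if and only if every n_i (1 ≤ i ≤ c) is constant on [0,1]. -/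

import Mathlib

open Filter Polynomial

private lemma tendsto_div_affine_aux (a b : ℝ) (ha : a ≠ 0) :
    Tendsto (fun z : ℝ => z / (a * z + b)) atTop (nhds a⁻¹) := by
  have h1 : Tendsto (fun z : ℝ => a + b / z) atTop (nhds a) := by
    simpa using tendsto_const_nhds.add ((tendsto_const_nhds (x := b)).div_atTop tendsto_id)
  refine (h1.inv₀ ha).congr' ?_
  filter_upwards [eventually_ne_atTop (0:ℝ)] with z hz
  have : a + b / z = (a * z + b) / z := by field_simp
  rw [this, inv_div]

private lemma div_mul_cancel_aux (a d p : ℝ) (hd : d ≠ 0) : a / d * (d * p) = a * p := by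
  field_simp

private lemma inv_div_mul_aux (d e m : ℝ) (hd : d ≠ 0) (he : e ≠ 0) :
    (d / e)⁻¹ * (m * 1 / e) = m / d := by
  field_simp

private lemma mul_div_mul_aux (k s d p : ℝ) (hd : d ≠ 0) :
    k * (s / d) * (p * d) = k * s * p := by
  field_simp

/-- For a dilute solution with a non-reacting solvent (substance 0, constant
amount `d₀ > 0`), along a feasible chemical path with nonzero stoichiometric
coefficients `ν₁,…,ν_c` satisfying `1 + ν₁ + ⋯ + ν_c ≠ 0`, the conventional
activity quotient `Q = x₀ · ∏ xᵢ ^ νᵢ` is constant on `[0,1]` if and only if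
every solute molar amount `nᵢ` (1 ≤ i ≤ c) is constant on `[0,1]`. -/
theorem dilute_solution_equilibrium_is_dynamic
    (c : ℕ) (hc : 2 ≤ c) (ν : Fin c → ℝ)
    (hν : ∀ i, ν i ≠ 0) (hsum : 1 + ∑ i, ν i ≠ 0)
    (d₀ : ℝ) (hd₀ : 0 < d₀) (n₀ : ℝ → ℝ) (hn₀ : ∀ t, n₀ t = d₀)
    (n n' : Fin c → ℝ → ℝ)
    (hderiv : ∀ i, ∀ t ∈ Set.Icc (0:ℝ) 1, HasDerivAt (n i) (n' i t) t)
    (hpos : ∀ i, ∀ t ∈ Set.Icc (0:ℝ) 1, 0 < n i t)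
    (hlink : ∀ i j, ∀ t ∈ Set.Icc (0:ℝ) 1, ν j * n' i t = ν i * n' j t)
    (Q : ℝ → ℝ)
    (hQ : ∀ t, Q t = (n₀ t / (n₀ t + ∑ j, n j t)) *
      ∏ i, (n i t / (n₀ t + ∑ j, n j t)) ^ (ν i)) :
    (∀ t ∈ Set.Icc (0:ℝ) 1, ∀ s ∈ Set.Icc (0:ℝ) 1, Q t = Q s) ↔
      (∀ i, ∀ t ∈ Set.Icc (0:ℝ) 1, ∀ s ∈ Set.Icc (0:ℝ) 1, n i t = n i s) := by
  have i₀ : Fin c := ⟨0, by omega⟩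
  haveI : Nonempty (Fin c) := ⟨i₀⟩
  constructor
  · -- hard direction: Q constant ⇒ all nᵢ constant
    intro hQc
    obtain ⟨S, hSdef⟩ : ∃ S : ℝ, S = ∑ i, ν i := ⟨_, rfl⟩
    have hsum' : 1 + S ≠ 0 := by rw [hSdef]; exact hsum
    obtain ⟨β, hβdef⟩ : ∃ β : Fin c → ℝ, ∀ j, β j = ν i₀ * n j 0 - ν j * n i₀ 0 :=
      ⟨_, fun _ => rfl⟩
    obtain ⟨γ, hγdef⟩ : ∃ γ : ℝ, γ = ν i₀ * d₀ + ∑ j, β j := ⟨_, rfl⟩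
    -- Step A : affine linkage
    have key : ∀ j, ∀ τ ∈ Set.Icc (0:ℝ) 1, ν j * n i₀ τ + β j = ν i₀ * n j τ := by
      intro j
      have hconst := constant_of_has_deriv_right_zero
        (f := fun τ => ν i₀ * n j τ - ν j * n i₀ τ) (a := 0) (b := 1)
        (fun τ hτ => (((hderiv j τ hτ).const_mul (ν i₀)).sub
          ((hderiv i₀ τ hτ).const_mul (ν j))).continuousAt.continuousWithinAt)
        (fun τ hτ => by
          have h := ((hderiv j τ (Set.Ico_subset_Icc_self hτ)).const_mul (ν i₀)).sub
            ((hderiv i₀ τ (Set.Ico_subset_Icc_self hτ)).const_mul (ν j))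
          have e : ν i₀ * n' j τ - ν j * n' i₀ τ = 0 := by
            rw [hlink j i₀ τ (Set.Ico_subset_Icc_self hτ)]; ring
          rw [e] at h; exact h.hasDerivWithinAt)
      intro τ hτ
      have h : ν i₀ * n j τ - ν j * n i₀ τ = ν i₀ * n j 0 - ν j * n i₀ 0 := hconst τ hτ
      rw [hβdef]
      linarith
    -- Step B : reduce to constancy of n i₀
    suffices hy : ∀ t ∈ Set.Icc (0:ℝ) 1, ∀ s ∈ Set.Icc (0:ℝ) 1, n i₀ t = n i₀ s by
      intro i t ht s hs
      have h1 := key i t ht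
      have h2 := key i s hs
      have h3 := hy t ht s hs
      have h4 : ν i₀ * n i t = ν i₀ * n i s := by rw [← h1, ← h2, h3]
      exact mul_left_cancel₀ (hν i₀) h4
    by_contra hne
    push_neg at hne
    obtain ⟨t₁, ht₁, t₂, ht₂, hneq⟩ := hne
    obtain ⟨a, ha, b, hb, hab⟩ : ∃ a ∈ Set.Icc (0:ℝ) 1, ∃ b ∈ Set.Icc (0:ℝ) 1,
        n i₀ a < n i₀ b := by
      rcases hneq.lt_or_gt with h | h
      · exact ⟨t₁, ht₁, t₂, ht₂, h⟩
      · exact ⟨t₂, ht₂, t₁, ht₁, h⟩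
    obtain ⟨u, hudef⟩ : ∃ u : ℝ, u = n i₀ a := ⟨_, rfl⟩
    obtain ⟨v, hvdef⟩ : ∃ v : ℝ, v = n i₀ b := ⟨_, rfl⟩
    have hab' : u < v := by rw [hudef, hvdef]; exact hab
    -- Step C : intermediate value theorem
    have hyc : ContinuousOn (n i₀) (Set.uIcc a b) := fun τ hτ =>
      ((hderiv i₀ τ (Set.uIcc_subset_Icc ha hb hτ)).continuousAt).continuousWithinAt
    have witness : ∀ z ∈ Set.Icc u v, ∃ τ ∈ Set.Icc (0:ℝ) 1, n i₀ τ = z := by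
      intro z hz
      have hz' : z ∈ Set.uIcc (n i₀ a) (n i₀ b) := by
        rw [← hudef, ← hvdef, Set.uIcc_of_le hab'.le]; exact hz
      obtain ⟨τ, hτ, hyz⟩ := intermediate_value_uIcc hyc hz'
      exact ⟨τ, Set.uIcc_subset_Icc ha hb hτ, hyz⟩
    -- Step D : facts at points of [u,v]
    have dfacts : ∀ z ∈ Set.Icc u v, ∃ τ ∈ Set.Icc (0:ℝ) 1,
        (∀ j, ν j * z + β j = ν i₀ * n j τ) ∧
        S * z + γ = ν i₀ * (d₀ + ∑ j, n j τ) := by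
      intro z hz
      obtain ⟨τ, hτ, hyz⟩ := witness z hz
      have hterm : ∀ j, ν j * z + β j = ν i₀ * n j τ := by
        intro j; rw [← hyz]; exact key j τ hτ
      refine ⟨τ, hτ, hterm, ?_⟩
      have h1 : S * z + γ = ∑ j, (ν j * z + β j) + ν i₀ * d₀ := by
        rw [hSdef, hγdef, Finset.sum_add_distrib, Finset.sum_mul]; ring
      rw [h1, Finset.sum_congr rfl (fun j _ => hterm j), ← Finset.mul_sum]
      ring
    -- log of Q
    have hlogQ : ∀ τ ∈ Set.Icc (0:ℝ) 1, Real.log (Q τ) =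
        Real.log d₀ + (∑ j, ν j * Real.log (n j τ))
          - (1 + S) * Real.log (d₀ + ∑ j, n j τ) := by
      intro τ hτ
      have hNp : 0 < d₀ + ∑ j, n j τ :=
        add_pos hd₀ (Finset.sum_pos (fun j _ => hpos j τ hτ) Finset.univ_nonempty)
      have hfac : ∀ j : Fin c, (0:ℝ) < (n j τ / (d₀ + ∑ l, n l τ)) ^ (ν j) :=
        fun j => Real.rpow_pos_of_pos (div_pos (hpos j τ hτ) hNp) _
      rw [hQ, hn₀]
      rw [Real.log_mul (ne_of_gt (div_pos hd₀ hNp))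
          (ne_of_gt (Finset.prod_pos (fun j _ => hfac j))),
        Real.log_div (ne_of_gt hd₀) (ne_of_gt hNp),
        Real.log_prod (fun j _ => (hfac j).ne')]
      have hterms : ∀ j ∈ Finset.univ, Real.log ((n j τ / (d₀ + ∑ l, n l τ)) ^ (ν j))
          = ν j * Real.log (n j τ) - ν j * Real.log (d₀ + ∑ l, n l τ) := by
        intro j _
        rw [Real.log_rpow (div_pos (hpos j τ hτ) hNp),
          Real.log_div (hpos j τ hτ).ne' hNp.ne', mul_sub]
      rw [Finset.sum_congr rfl hterms, Finset.sum_sub_distrib, ← Finset.sum_mul]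
      rw [hSdef]; ring
    -- the one-variable function L and its derivative H
    obtain ⟨L, hLdef⟩ : ∃ L : ℝ → ℝ, L = fun z => Real.log d₀
        + (∑ j, ν j * Real.log ((ν j * z + β j) / ν i₀))
        - (1 + S) * Real.log ((S * z + γ) / ν i₀) := ⟨_, rfl⟩
    obtain ⟨H, hHdef⟩ : ∃ H : ℝ → ℝ, H = fun z => (∑ j, ν j ^ 2 / (ν j * z + β j))
        - (1 + S) * (S / (S * z + γ)) := ⟨_, rfl⟩
    have hLconst : ∀ z ∈ Set.Icc u v, L z = Real.log (Q a) := by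
      intro z hz
      obtain ⟨τ, hτ, hterm, hsum2⟩ := dfacts z hz
      have e1 : ∀ j, (ν j * z + β j) / ν i₀ = n j τ := by
        intro j; rw [hterm j, mul_div_cancel_left₀ _ (hν i₀)]
      have e2 : (S * z + γ) / ν i₀ = d₀ + ∑ j, n j τ := by
        rw [hsum2, mul_div_cancel_left₀ _ (hν i₀)]
      have h3 : L z = Real.log (Q τ) := by
        rw [hLdef]
        simp only [e1, e2]
        rw [hlogQ τ hτ]
      rw [h3, hQc τ hτ a ha]
    have hLderiv : ∀ z ∈ Set.Icc u v, HasDerivAt L (H z) z := by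
      intro z hz
      obtain ⟨τ, hτ, hterm, hsum2⟩ := dfacts z hz
      have hdj : ∀ j, ν j * z + β j ≠ 0 := fun j => by
        rw [hterm j]; exact mul_ne_zero (hν i₀) (hpos j τ hτ).ne'
      have hdS : S * z + γ ≠ 0 := by
        rw [hsum2]
        exact mul_ne_zero (hν i₀)
          (add_pos hd₀ (Finset.sum_pos (fun j _ => hpos j τ hτ) Finset.univ_nonempty)).ne'
      have hj : ∀ j : Fin c, HasDerivAt (fun w => ν j * Real.log ((ν j * w + β j) / ν i₀))
          (ν j ^ 2 / (ν j * z + β j)) z := by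
        intro j
        have haff : HasDerivAt (fun w => (ν j * w + β j) / ν i₀) (ν j * 1 / ν i₀) z :=
          (((hasDerivAt_id z).const_mul (ν j)).add_const (β j)).div_const (ν i₀)
        have hne : (ν j * z + β j) / ν i₀ ≠ 0 := div_ne_zero (hdj j) (hν i₀)
        have h2 := ((Real.hasDerivAt_log hne).comp z haff).const_mul (ν j)
        rw [inv_div_mul_aux _ _ _ (hdj j) (hν i₀)] at h2
        have hval : ν j * (ν j / (ν j * z + β j)) = ν j ^ 2 / (ν j * z + β j) := by
          rw [← mul_div_assoc, ← sq]
        rw [hval] at h2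
        simpa [Function.comp] using h2
      have hs2 : HasDerivAt (fun w => (1 + S) * Real.log ((S * w + γ) / ν i₀))
          ((1 + S) * (S / (S * z + γ))) z := by
        have haff : HasDerivAt (fun w => (S * w + γ) / ν i₀) (S * 1 / ν i₀) z :=
          (((hasDerivAt_id z).const_mul S).add_const γ).div_const (ν i₀)
        have hne : (S * z + γ) / ν i₀ ≠ 0 := div_ne_zero hdS (hν i₀)
        have h2 := ((Real.hasDerivAt_log hne).comp z haff).const_mul (1 + S)
        rw [inv_div_mul_aux _ _ _ hdS (hν i₀)] at h2
        simpa [Function.comp] using h2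
      have hco := ((hasDerivAt_const z (Real.log d₀)).add
        (HasDerivAt.fun_sum (fun j (_ : j ∈ Finset.univ) => hj j))).sub hs2
      rw [hLdef, hHdef]
      rw [zero_add] at hco
      exact hco
    -- H vanishes on (u,v)
    have hH0 : ∀ z ∈ Set.Ioo u v, H z = 0 := by
      intro z hz
      have hmem : Set.Icc u v ∈ nhds z := Icc_mem_nhds hz.1 hz.2
      have heq : L =ᶠ[nhds z] fun _ => Real.log (Q a) :=
        eventually_of_mem hmem (fun w hw => hLconst w hw)
      have h0 : HasDerivAt L 0 z := (hasDerivAt_const z _).congr_of_eventuallyEq heq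
      exact (hLderiv z (Set.Ioo_subset_Icc_self hz)).unique h0
    -- case split on S
    rcases eq_or_ne S 0 with hS0 | hS0
    · -- S = 0 : H is a sum of terms of one sign
      have hzmem : (u + v) / 2 ∈ Set.Ioo u v := ⟨by linarith, by linarith⟩
      obtain ⟨τ, hτ, hterm, -⟩ := dfacts _ (Set.Ioo_subset_Icc_self hzmem)
      have hcomp : H ((u + v) / 2) = (∑ j, ν j ^ 2 / n j τ) / ν i₀ := by
        rw [hHdef]
        simp only [hS0, zero_div, mul_zero, zero_mul, sub_zero]
        rw [Finset.sum_div]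
        refine Finset.sum_congr rfl fun j _ => ?_
        rw [hterm j, div_div, mul_comm (n j τ) (ν i₀)]
      have hnum : 0 < ∑ j, ν j ^ 2 / n j τ :=
        Finset.sum_pos (fun j _ =>
          div_pos (pow_two_pos_of_ne_zero (hν j)) (hpos j τ hτ)) Finset.univ_nonempty
      have hHz := hH0 _ hzmem
      rw [hcomp] at hHz
      exact (div_ne_zero hnum.ne' (hν i₀)) hHz
    · -- S ≠ 0 : polynomial argument
      obtain ⟨P, hPdef⟩ : ∃ P : Polynomial ℝ, P = (∑ j, C (ν j ^ 2) *
          ∏ l ∈ Finset.univ.erase j, (C (ν l) * X + C (β l))) * (C S * X + C γ)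
        - C ((1 + S) * S) * ∏ l, (C (ν l) * X + C (β l)) := ⟨_, rfl⟩
      have hevalP : ∀ z : ℝ, P.eval z =
          (∑ j, ν j ^ 2 * ∏ l ∈ Finset.univ.erase j, (ν l * z + β l)) * (S * z + γ)
            - (1 + S) * S * ∏ l, (ν l * z + β l) := by
        intro z
        rw [hPdef]
        simp [eval_finset_sum, eval_prod]
      have hident : ∀ z : ℝ, (∀ l, ν l * z + β l ≠ 0) → S * z + γ ≠ 0 →
          P.eval z = H z * ((∏ l, (ν l * z + β l)) * (S * z + γ)) := by
        intro z hdl hdS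
        rw [hevalP, hHdef]
        simp only [sub_mul]
        congr 1
        · rw [← mul_assoc]
          congr 1
          rw [Finset.sum_mul]
          refine Finset.sum_congr rfl fun j _ => ?_
          rw [← Finset.mul_prod_erase Finset.univ _ (Finset.mem_univ j),
            div_mul_cancel_aux _ _ _ (hdl j)]
        · rw [mul_div_mul_aux _ _ _ _ hdS]
      have hProots : ∀ z ∈ Set.Ioo u v, P.IsRoot z := by
        intro z hz
        obtain ⟨τ, hτ, hterm, hsum2⟩ := dfacts z (Set.Ioo_subset_Icc_self hz)
        have hdj : ∀ j, ν j * z + β j ≠ 0 := fun j => by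
          rw [hterm j]; exact mul_ne_zero (hν i₀) (hpos j τ hτ).ne'
        have hdS : S * z + γ ≠ 0 := by
          rw [hsum2]
          exact mul_ne_zero (hν i₀)
            (add_pos hd₀ (Finset.sum_pos (fun j _ => hpos j τ hτ) Finset.univ_nonempty)).ne'
        have h := hident z hdj hdS
        rw [hH0 z hz, zero_mul] at h
        exact h
      have hP0 : P = 0 := by
        refine P.eq_zero_of_infinite_isRoot ?_
        refine Set.Infinite.mono hProots ?_
        exact Set.infinite_coe_iff.mp (Set.Ioo.infinite hab')
      have hEv : ∀ᶠ z : ℝ in atTop, H z = 0 := by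
        have hdj : ∀ᶠ z : ℝ in atTop, ∀ l, ν l * z + β l ≠ 0 := by
          rw [eventually_all]
          intro l
          filter_upwards [eventually_ne_atTop (-(β l) / ν l)] with z hz hcon
          apply hz
          rw [eq_div_iff (hν l)]
          linarith [mul_comm z (ν l)]
        have hdS : ∀ᶠ z : ℝ in atTop, S * z + γ ≠ 0 := by
          filter_upwards [eventually_ne_atTop (-γ / S)] with z hz hcon
          apply hz
          rw [eq_div_iff hS0]
          linarith [mul_comm z S]
        filter_upwards [hdj, hdS] with z h1 h2
        have h3 := hident z h1 h2
        rw [hP0, eval_zero] at h3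
        rcases mul_eq_zero.mp h3.symm with h | h
        · exact h
        · exact absurd h (mul_ne_zero
            (Finset.prod_ne_zero_iff.mpr (fun l _ => h1 l)) h2)
      have hlim : Tendsto (fun z : ℝ => z * H z) atTop
          (nhds ((∑ j, ν j ^ 2 * (ν j)⁻¹) - (1 + S) * S * S⁻¹)) := by
        have heq : ∀ z : ℝ, z * H z =
            (∑ j, ν j ^ 2 * (z / (ν j * z + β j))) - (1 + S) * S * (z / (S * z + γ)) := by
          intro z
          rw [hHdef]
          simp only [mul_sub, Finset.mul_sum]
          congr 1
          · exact Finset.sum_congr rfl fun j _ => by ring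
          · ring
        refine Tendsto.congr (fun z => (heq z).symm) ?_
        refine Tendsto.sub ?_ ?_
        · exact tendsto_finset_sum _ fun j _ =>
            (tendsto_div_affine_aux (ν j) (β j) (hν j)).const_mul _
        · exact (tendsto_div_affine_aux S γ hS0).const_mul _
      have hval : (∑ j, ν j ^ 2 * (ν j)⁻¹) - (1 + S) * S * S⁻¹ = -1 := by
        have e1 : ∀ j : Fin c, ν j ^ 2 * (ν j)⁻¹ = ν j := fun j => by
          rw [sq, mul_assoc, mul_inv_cancel₀ (hν j), mul_one]
        rw [Finset.sum_congr rfl (fun j _ => e1 j), ← hSdef, mul_assoc,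
          mul_inv_cancel₀ hS0, mul_one]
        ring
      rw [hval] at hlim
      have hlim0 : Tendsto (fun z : ℝ => z * H z) atTop (nhds 0) := by
        refine Tendsto.congr' ?_ tendsto_const_nhds
        filter_upwards [hEv] with z hz
        rw [hz, mul_zero]
      exact absurd (tendsto_nhds_unique hlim hlim0) (by norm_num)
  · -- easy direction
    intro hconst t ht s hs
    have hns : ∀ j, n j t = n j s := fun j => hconst j t ht s hs
    simp only [hQ, hn₀, hns]
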